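/- The Gaussian mechanism M(D) = f(D) + σΔ(f)·N(0, I), where Δ(f) is the L2 sensitivity of f : D → ℝ^p, satisfies (1/(2σ²))-zCDP. -/

import Mathlib

open MeasureTheory ProbabilityTheory
open scoped NNReal ENNReal

/-- Rényi divergence of order α between two measures. -/
noncomputable def renyiDiv {Ω : Type*} [MeasurableSpace Ω] (α : ℝ) (μ ν : Measure Ω) : ℝ :=
  (α - 1)⁻¹ * Real.log (∫ x, (μ.rnDeriv ν x).toReal ^ α ∂ν)

/-- A mechanism `M` satisfies ρ-zCDP (w.r.t. a neighboring relation) if the Rényi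
divergence of order α between outputs on neighboring datasets is at most ρ·α for all α > 1. -/
def zCDP {D Ω : Type*} [MeasurableSpace Ω] (Neighbor : D → D → Prop)
    (M : D → Measure Ω) (ρ : ℝ) : Prop :=
  ∀ d d' : D, Neighbor d d' → ∀ α : ℝ, 1 < α → renyiDiv α (M d) (M d') ≤ ρ * α

/-- Tonelli for a finite product of functions of separate variables. -/
lemma lintegral_pi_prod : ∀ {n : ℕ} (ν : Fin n → Measure ℝ), (∀ i, SigmaFinite (ν i)) →
    ∀ {g : Fin n → ℝ → ℝ≥0∞}, (∀ i, Measurable (g i)) →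
    ∫⁻ x : Fin n → ℝ, ∏ i, g i (x i) ∂Measure.pi ν = ∏ i, ∫⁻ y, g i y ∂ν i := by
  intro n
  induction n with
  | zero =>
      intro ν _ g hg
      simp [Measure.pi_of_empty ν]
  | succ n ih =>
      intro ν hsf g hg
      haveI := hsf
      have hmp := (measurePreserving_piFinSuccAbove ν 0).symm
      have hmeas : Measurable fun x : Fin (n + 1) → ℝ => ∏ i, g i (x i) :=
        Finset.measurable_prod _ fun i _ => (hg i).comp (measurable_pi_apply i)
      rw [← hmp.lintegral_comp hmeas]
      have heq : ∀ z : ℝ × (Fin n → ℝ),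
          (∏ i, g i (((MeasurableEquiv.piFinSuccAbove (fun _ => ℝ) 0).symm z) i))
            = g 0 z.1 * ∏ i : Fin n, g i.succ (z.2 i) := by
        intro z
        rw [Fin.prod_univ_succ]
        simp [MeasurableEquiv.piFinSuccAbove_symm_apply, Fin.insertNthEquiv,
          Fin.insertNth_zero, Fin.zero_succAbove]
      simp_rw [heq]
      rw [lintegral_prod_mul (f := g 0) (g := fun w : Fin n → ℝ => ∏ i, g i.succ (w i))
        (hg 0).aemeasurable
        (Finset.measurable_prod Finset.univ
          (fun i _ => (hg i.succ).comp (measurable_pi_apply i))).aemeasurable]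
      simp only [Fin.zero_succAbove]
      rw [ih _ (fun i => hsf i.succ) (fun i => hg i.succ), Fin.prod_univ_succ]

/-- A finite product of measures with densities is the product measure with the product
density. -/
lemma pi_withDensity {n : ℕ} (ν : Fin n → Measure ℝ) [hsf : ∀ i, SigmaFinite (ν i)]
    {g : Fin n → ℝ → ℝ≥0∞} (hg : ∀ i, Measurable (g i))
    (hsf' : ∀ i, SigmaFinite ((ν i).withDensity (g i))) :
    Measure.pi (fun i => (ν i).withDensity (g i))
      = (Measure.pi ν).withDensity (fun x => ∏ i, g i (x i)) := by
  haveI := hsf'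
  refine (Measure.pi_eq (μ := fun i => (ν i).withDensity (g i))
    (μ' := (Measure.pi ν).withDensity (fun x => ∏ i, g i (x i))) fun s hs => ?_)
  rw [withDensity_apply _ (MeasurableSet.univ_pi hs)]
  have hind : ∀ x : Fin n → ℝ,
      (Set.pi Set.univ s).indicator (fun x => ∏ i, g i (x i)) x
        = ∏ i, (s i).indicator (g i) (x i) := by
    intro x
    by_cases hx : x ∈ Set.pi Set.univ s
    · rw [Set.indicator_of_mem hx]
      exact Finset.prod_congr rfl fun i _ =>
        (Set.indicator_of_mem (hx i (Set.mem_univ i)) _).symm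
    · rw [Set.indicator_of_notMem hx]
      rw [Set.mem_univ_pi] at hx
      push_neg at hx
      obtain ⟨i, hi⟩ := hx
      exact (Finset.prod_eq_zero (Finset.mem_univ i) (Set.indicator_of_notMem hi _)).symm
  rw [← lintegral_indicator (MeasurableSet.univ_pi hs)]
  simp_rw [hind]
  rw [lintegral_pi_prod ν hsf (fun i => (hg i).indicator (hs i))]
  exact Finset.prod_congr rfl fun i _ => by
    rw [lintegral_indicator (hs i), withDensity_apply _ (hs i)]

/-- The key one-dimensional Gaussian moment computation. -/
lemma lintegral_gauss_ratio_rpow (m m' : ℝ) {v : ℝ≥0} (hv : v ≠ 0) (α : ℝ) :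
    ∫⁻ y, ENNReal.ofReal ((gaussianPDFReal m v y / gaussianPDFReal m' v y) ^ α)
        ∂gaussianReal m' v
      = ENNReal.ofReal (Real.exp (α * (α - 1) * (m - m') ^ 2 / (2 * v))) := by
  have hv' : (0 : ℝ) < v := by positivity
  have hmeas : Measurable fun y : ℝ =>
      ENNReal.ofReal ((gaussianPDFReal m v y / gaussianPDFReal m' v y) ^ α) := by
    have : Measurable fun y : ℝ => (gaussianPDFReal m v y / gaussianPDFReal m' v y) ^ α := by
      have h1 : Measurable fun y : ℝ => gaussianPDFReal m v y / gaussianPDFReal m' v y :=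
        (measurable_gaussianPDFReal m v).div (measurable_gaussianPDFReal m' v)
      measurability
    exact this.ennreal_ofReal
  rw [gaussianReal_of_var_ne_zero _ hv,
    lintegral_withDensity_eq_lintegral_mul _ (measurable_gaussianPDF m' v) hmeas]
  set c : ℝ := α * m + (1 - α) * m' with hc
  have hpoint : ∀ y : ℝ,
      (gaussianPDF m' v * fun y =>
          ENNReal.ofReal ((gaussianPDFReal m v y / gaussianPDFReal m' v y) ^ α)) y
        = ENNReal.ofReal (Real.exp (α * (α - 1) * (m - m') ^ 2 / (2 * v)))
            * gaussianPDF c v y := by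
    intro y
    have hsq : (0 : ℝ) < Real.sqrt (2 * Real.pi * v) := by positivity
    have hratio : gaussianPDFReal m v y / gaussianPDFReal m' v y
        = Real.exp (-(y - m) ^ 2 / (2 * v) - -(y - m') ^ 2 / (2 * v)) := by
      rw [gaussianPDFReal, gaussianPDFReal, mul_div_mul_left _ _ (by positivity),
        Real.exp_sub]
    have hrpow : (gaussianPDFReal m v y / gaussianPDFReal m' v y) ^ α
        = Real.exp ((-(y - m) ^ 2 / (2 * v) - -(y - m') ^ 2 / (2 * v)) * α) := by
      rw [hratio, Real.rpow_def_of_pos (Real.exp_pos _), Real.log_exp]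
    have hkey : gaussianPDFReal m' v y * Real.exp
          ((-(y - m) ^ 2 / (2 * v) - -(y - m') ^ 2 / (2 * v)) * α)
        = Real.exp (α * (α - 1) * (m - m') ^ 2 / (2 * v)) * gaussianPDFReal c v y := by
      rw [gaussianPDFReal, gaussianPDFReal, mul_assoc, ← Real.exp_add]
      conv_rhs => rw [mul_comm, mul_assoc, ← Real.exp_add]
      congr 1
      have hvne : (2 : ℝ) * v ≠ 0 := by positivity
      rw [hc]
      field_simp
      ring
    simp only [Pi.mul_apply, gaussianPDF]
    rw [← ENNReal.ofReal_mul (gaussianPDFReal_nonneg m' v y), hrpow, hkey,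
      ENNReal.ofReal_mul (Real.exp_nonneg _)]
  simp_rw [hpoint]
  rw [lintegral_const_mul _ (measurable_gaussianPDF c v), lintegral_gaussianPDF_eq_one c hv,
    mul_one]

theorem gaussianMechanism_zCDP {D : Type*} {p : ℕ} (Neighbor : D → D → Prop)
    (f : D → Fin p → ℝ) (Δ σ : ℝ≥0) (hσ : 0 < σ)
    (hΔ : ∀ d d' : D, Neighbor d d' →
      Real.sqrt (∑ j, (f d j - f d' j) ^ 2) ≤ Δ) :
    zCDP Neighbor
      (fun d => Measure.pi (fun j : Fin p => gaussianReal (f d j) ((σ * Δ) ^ 2)))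
      (1 / (2 * (σ : ℝ) ^ 2)) := by
  intro d d' hN α hα
  change renyiDiv α (Measure.pi fun j : Fin p => gaussianReal (f d j) ((σ * Δ) ^ 2))
    (Measure.pi fun j : Fin p => gaussianReal (f d' j) ((σ * Δ) ^ 2))
    ≤ 1 / (2 * (σ : ℝ) ^ 2) * α
  have hα0 : (0 : ℝ) < α := lt_trans one_pos hα
  have hρα : 0 ≤ 1 / (2 * (σ : ℝ) ^ 2) * α := by positivity
  set v : ℝ≥0 := (σ * Δ) ^ 2 with hvdef
  by_cases hΔ0 : Δ = 0
  · -- degenerate case : the two measures coincide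
    have hS : ∑ j, (f d j - f d' j) ^ 2 = 0 := by
      have h1 := hΔ d d' hN
      rw [hΔ0] at h1
      have h2 : Real.sqrt (∑ j, (f d j - f d' j) ^ 2) = 0 :=
        le_antisymm (by simpa using h1) (Real.sqrt_nonneg _)
      rwa [Real.sqrt_eq_zero (Finset.sum_nonneg fun j _ => sq_nonneg _)] at h2
    have hfd : f d = f d' := by
      funext j
      have := (Finset.sum_eq_zero_iff_of_nonneg (fun j _ => sq_nonneg (f d j - f d' j))).mp hS
        j (Finset.mem_univ j)
      have := pow_eq_zero_iff (n := 2) (by norm_num) |>.mp this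
      linarith [sub_eq_zero.mp this]
    simp only [hfd]
    set μ : Measure (Fin p → ℝ) := Measure.pi (fun j => gaussianReal (f d' j) v) with hμ
    haveI : IsProbabilityMeasure μ := Measure.pi.instIsProbabilityMeasure _
    have h1 : ∫ x, (μ.rnDeriv μ x).toReal ^ α ∂μ = 1 := by
      have h2 : ∀ᵐ x ∂μ, (μ.rnDeriv μ x).toReal ^ α = 1 :=
        (Measure.rnDeriv_self μ).mono fun x hx => by
          rw [hx]; simp [Real.one_rpow]
      rw [integral_congr_ae h2]
      simp
    rw [renyiDiv, h1, Real.log_one, mul_zero]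
    exact hρα
  · -- main case
    have hv : v ≠ 0 := pow_ne_zero _ (mul_ne_zero hσ.ne' hΔ0)
    have hv' : (0 : ℝ) < v := by
      have := hv
      positivity
    set m : Fin p → ℝ := f d with hm
    set m' : Fin p → ℝ := f d' with hm'
    set μ : Measure (Fin p → ℝ) := Measure.pi (fun j => gaussianReal (m j) v) with hμdef
    set ν : Measure (Fin p → ℝ) := Measure.pi (fun j => gaussianReal (m' j) v) with hνdef
    haveI : IsProbabilityMeasure ν := Measure.pi.instIsProbabilityMeasure _
    haveI : IsProbabilityMeasure μ := Measure.pi.instIsProbabilityMeasure _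
    set F : (Fin p → ℝ) → ℝ≥0∞ := fun x => ∏ j, gaussianPDF (m j) v (x j) with hF
    set G : (Fin p → ℝ) → ℝ≥0∞ := fun x => ∏ j, gaussianPDF (m' j) v (x j) with hG
    have hFmeas : Measurable F :=
      Finset.measurable_prod _ fun j _ =>
        (measurable_gaussianPDF _ _).comp (measurable_pi_apply j)
    have hGmeas : Measurable G :=
      Finset.measurable_prod _ fun j _ =>
        (measurable_gaussianPDF _ _).comp (measurable_pi_apply j)
    have hhmeas : Measurable fun x => F x / G x := hFmeas.div hGmeas
    have hsf' : ∀ (mm : Fin p → ℝ) (i : Fin p),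
        SigmaFinite (volume.withDensity (gaussianPDF (mm i) v)) := by
      intro mm i
      rw [← gaussianReal_of_var_ne_zero _ hv]
      infer_instance
    have hμ : μ = (Measure.pi fun _ : Fin p => (volume : Measure ℝ)).withDensity F := by
      rw [hμdef]
      have : (fun j : Fin p => gaussianReal (m j) v)
          = fun j => volume.withDensity (gaussianPDF (m j) v) := by
        funext j; exact gaussianReal_of_var_ne_zero _ hv
      rw [this, pi_withDensity _ (fun i => measurable_gaussianPDF _ _) (hsf' m)]
    have hν : ν = (Measure.pi fun _ : Fin p => (volume : Measure ℝ)).withDensity G := by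
      rw [hνdef]
      have : (fun j : Fin p => gaussianReal (m' j) v)
          = fun j => volume.withDensity (gaussianPDF (m' j) v) := by
        funext j; exact gaussianReal_of_var_ne_zero _ hv
      rw [this, pi_withDensity _ (fun i => measurable_gaussianPDF _ _) (hsf' m')]
    have hG0 : ∀ x, G x ≠ 0 := by
      intro x
      rw [hG, Finset.prod_ne_zero_iff]
      exact fun j _ => (gaussianPDF_pos _ hv _).ne'
    have hGtop : ∀ x, G x ≠ ∞ := by
      intro x
      refine (ENNReal.prod_lt_top fun j _ => ?_).ne
      exact ENNReal.ofReal_lt_top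
    have hkey : ν.withDensity (fun x => F x / G x) = μ := by
      rw [hν, ← withDensity_mul _ hGmeas hhmeas]
      have : (G * fun x => F x / G x) = F := by
        funext x
        exact ENNReal.mul_div_cancel (hG0 x) (hGtop x)
      rw [this, ← hμ]
    have hrn : μ.rnDeriv ν =ᵐ[ν] fun x => F x / G x := by
      rw [← hkey]
      exact Measure.rnDeriv_withDensity ν hhmeas
    -- the ratio as a product of one-dimensional ratios
    set r : Fin p → ℝ → ℝ := fun j y =>
      (gaussianPDFReal (m j) v y / gaussianPDFReal (m' j) v y) ^ α with hr
    have hrnonneg : ∀ j y, 0 ≤ r j y := fun j y =>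
      Real.rpow_nonneg (div_nonneg (gaussianPDFReal_nonneg _ _ _)
        (gaussianPDFReal_nonneg _ _ _)) α
    have hrmeas : ∀ j, Measurable (r j) := by
      intro j
      have h1 : Measurable fun y : ℝ =>
          gaussianPDFReal (m j) v y / gaussianPDFReal (m' j) v y :=
        (measurable_gaussianPDFReal _ _).div (measurable_gaussianPDFReal _ _)
      rw [hr]
      measurability
    have hpoint : ∀ x, (F x / G x).toReal ^ α = ∏ j, r j (x j) := by
      intro x
      rw [ENNReal.toReal_div, hF, hG, ENNReal.toReal_prod, ENNReal.toReal_prod]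
      simp only [gaussianPDF, ENNReal.toReal_ofReal (gaussianPDFReal_nonneg _ _ _)]
      rw [← Finset.prod_div_distrib, ← Real.finset_prod_rpow _ _
        (fun j _ => div_nonneg (gaussianPDFReal_nonneg _ _ _)
          (gaussianPDFReal_nonneg _ _ _)) α]
    have hprodmeas : Measurable fun x : Fin p → ℝ => ∏ j, r j (x j) :=
      Finset.measurable_prod _ fun j _ => (hrmeas j).comp (measurable_pi_apply j)
    -- compute the integral
    have hint : ∫ x, (μ.rnDeriv ν x).toReal ^ α ∂ν
        = Real.exp (∑ j, α * (α - 1) * (m j - m' j) ^ 2 / (2 * v)) := by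
      have h1 : ∫ x, (μ.rnDeriv ν x).toReal ^ α ∂ν = ∫ x, ∏ j, r j (x j) ∂ν := by
        refine integral_congr_ae (hrn.mono fun x hx => ?_)
        dsimp only
        rw [hx, hpoint]
      rw [h1, integral_eq_lintegral_of_nonneg_ae
        (ae_of_all _ fun x => Finset.prod_nonneg fun j _ => hrnonneg j (x j))
        hprodmeas.aestronglyMeasurable]
      have h2 : ∀ x : Fin p → ℝ, ENNReal.ofReal (∏ j, r j (x j))
          = ∏ j, ENNReal.ofReal (r j (x j)) :=
        fun x => ENNReal.ofReal_prod_of_nonneg fun j _ => hrnonneg j (x j)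
      simp_rw [h2]
      rw [lintegral_pi_prod _ (fun j => inferInstance)
        (fun j => (hrmeas j).ennreal_ofReal)]
      have h3 : ∀ j : Fin p, ∫⁻ y, ENNReal.ofReal (r j y) ∂gaussianReal (m' j) v
          = ENNReal.ofReal (Real.exp (α * (α - 1) * (m j - m' j) ^ 2 / (2 * v))) :=
        fun j => lintegral_gauss_ratio_rpow (m j) (m' j) hv α
      simp_rw [h3]
      rw [← ENNReal.ofReal_prod_of_nonneg fun j _ => Real.exp_nonneg _,
        ENNReal.toReal_ofReal (Finset.prod_nonneg fun j _ => Real.exp_nonneg _),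
        ← Real.exp_sum]
    rw [renyiDiv, hint, Real.log_exp]
    -- final arithmetic
    set S : ℝ := ∑ j, (m j - m' j) ^ 2 with hS
    have hSnonneg : 0 ≤ S := Finset.sum_nonneg fun j _ => sq_nonneg _
    have hsum : ∑ j, α * (α - 1) * (m j - m' j) ^ 2 / (2 * v) = α * (α - 1) * S / (2 * v) := by
      rw [hS, Finset.mul_sum, Finset.sum_div]
    rw [hsum]
    have hα1 : α - 1 ≠ 0 := by linarith
    have heq : (α - 1)⁻¹ * (α * (α - 1) * S / (2 * ↑v)) = α * S / (2 * v) := by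
      field_simp
    rw [heq]
    have hSle : S ≤ (Δ : ℝ) ^ 2 := by
      have h1 := hΔ d d' hN
      have h2 : S = Real.sqrt S ^ 2 := (Real.sq_sqrt hSnonneg).symm
      rw [h2]
      exact pow_le_pow_left₀ (Real.sqrt_nonneg _) h1 2
    have hvval : (v : ℝ) = (σ : ℝ) ^ 2 * (Δ : ℝ) ^ 2 := by
      rw [hvdef]
      push_cast
      ring
    have hΔ0' : (0 : ℝ) < (Δ : ℝ) := by
      exact_mod_cast (pos_iff_ne_zero.mpr hΔ0 : 0 < Δ)
    have hσ0' : (0 : ℝ) < (σ : ℝ) := by exact_mod_cast hσ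
    calc α * S / (2 * v) ≤ α * (Δ : ℝ) ^ 2 / (2 * v) := by
          apply div_le_div_of_nonneg_right ?_ (by positivity)
          · exact mul_le_mul_of_nonneg_left hSle hα0.le
      _ = 1 / (2 * (σ : ℝ) ^ 2) * α := by
          rw [hvval]
          field_simp
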